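/- Let ρ1 and ρ2 be n×n density matrices and let d : ℝ^n → ℝ be a Schur-convex function. Then for every n×n unitary matrix U one has d(λ(ρ1 − Uρ2U†)) ≤ d(λ(Λ↓(ρ1) − Λ↑(ρ2))), and there exists a unitary U for which equality holds; in other words, the maximum of d(λ(ρ1 − Uρ2U†)) over all unitary U equals d(λ(Λ↓(ρ1) − Λ↑(ρ2))). -/

import Mathlib

open Matrix
open scoped ComplexOrder Classical

/-- The vector of a tuple's entries sorted in decreasing (nonincreasing) order. -/
noncomputable def sortDec {n : ℕ} (x : Fin n → ℝ) : Fin n → ℝ :=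
  fun i => x (Tuple.sort x i.rev)

/-- The eigenvalues of a Hermitian matrix arranged in decreasing order,
`λ(A)`; junk value `0` if `A` is not Hermitian. -/
noncomputable def eigsDec {n : ℕ} (A : Matrix (Fin n) (Fin n) ℂ) : Fin n → ℝ :=
  if hA : A.IsHermitian then sortDec hA.eigenvalues else 0

/-- The eigenvalues of a Hermitian matrix arranged in increasing order. -/
noncomputable def eigsInc {n : ℕ} (A : Matrix (Fin n) (Fin n) ℂ) : Fin n → ℝ :=
  fun i => eigsDec A i.rev

/-- `Λ↓(A)`: the diagonal matrix of the eigenvalues of `A` in decreasing order. -/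
noncomputable def LambdaDown {n : ℕ} (A : Matrix (Fin n) (Fin n) ℂ) :
    Matrix (Fin n) (Fin n) ℂ :=
  Matrix.diagonal fun i => (eigsDec A i : ℂ)

/-- `Λ↑(A)`: the diagonal matrix of the eigenvalues of `A` in increasing order. -/
noncomputable def LambdaUp {n : ℕ} (A : Matrix (Fin n) (Fin n) ℂ) :
    Matrix (Fin n) (Fin n) ℂ :=
  Matrix.diagonal fun i => (eigsInc A i : ℂ)

/-- `x ≺ y`: the sum of the `k` largest entries of `x` is at most that of `y`
for every `k`, with equality of the total sums. -/
def Majorizes {n : ℕ} (x y : Fin n → ℝ) : Prop :=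
  (∀ k : ℕ, ∑ i ∈ Finset.univ.filter (fun i : Fin n => (i : ℕ) < k), sortDec x i ≤
      ∑ i ∈ Finset.univ.filter (fun i : Fin n => (i : ℕ) < k), sortDec y i) ∧
    (∑ i, x i) = ∑ i, y i

/-- A function `d` is Schur-convex if `x ≺ y` implies `d x ≤ d y`. -/
def SchurConvex {n : ℕ} (d : (Fin n → ℝ) → ℝ) : Prop :=
  ∀ x y : Fin n → ℝ, Majorizes x y → d x ≤ d y

/-- A density matrix: positive semidefinite with trace one. -/
def IsDensityMatrix {n : ℕ} (ρ : Matrix (Fin n) (Fin n) ℂ) : Prop :=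
  ρ.PosSemidef ∧ ρ.trace = 1

/-- A quantum channel: completely positive trace preserving map in Kraus form. -/
def IsQuantumChannel {n : ℕ}
    (Φ : Matrix (Fin n) (Fin n) ℂ → Matrix (Fin n) (Fin n) ℂ) : Prop :=
  ∃ (r : ℕ) (F : Fin r → Matrix (Fin n) (Fin n) ℂ),
    (∑ j, (F j)ᴴ * F j) = 1 ∧ ∀ X, Φ X = ∑ j, F j * X * (F j)ᴴ

/-- A unital quantum channel. -/
def IsUnitalChannel {n : ℕ}
    (Φ : Matrix (Fin n) (Fin n) ℂ → Matrix (Fin n) (Fin n) ℂ) : Prop :=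
  IsQuantumChannel Φ ∧ Φ 1 = 1

/-- A mixed unitary channel: a convex combination of unitary conjugations. -/
def IsMixedUnitaryChannel {n : ℕ}
    (Φ : Matrix (Fin n) (Fin n) ℂ → Matrix (Fin n) (Fin n) ℂ) : Prop :=
  ∃ (r : ℕ) (t : Fin r → ℝ) (U : Fin r → Matrix (Fin n) (Fin n) ℂ),
    (∀ j, 0 ≤ t j) ∧ (∑ j, t j) = 1 ∧
      (∀ j, U j ∈ Matrix.unitaryGroup (Fin n) ℂ) ∧
      ∀ X, Φ X = ∑ j, (t j : ℂ) • (U j * X * (U j)ᴴ)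

/-- Functional calculus: `f(A)` for a Hermitian matrix `A`, via the spectral theorem;
junk value `0` if `A` is not Hermitian. -/
noncomputable def matFun {n : ℕ} (f : ℝ → ℝ) (A : Matrix (Fin n) (Fin n) ℂ) :
    Matrix (Fin n) (Fin n) ℂ :=
  if hA : A.IsHermitian then
    (hA.eigenvectorUnitary : Matrix (Fin n) (Fin n) ℂ) *
      Matrix.diagonal (fun i => (f (hA.eigenvalues i) : ℂ)) *
      (hA.eigenvectorUnitary : Matrix (Fin n) (Fin n) ℂ)ᴴ
  else 0

/-- The PSD square root, as `Matrix.PosSemidef.sqrt` was defined in Mathlib (Dec 2024). -/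
noncomputable def oldPSDSqrt {n : ℕ} {A : Matrix (Fin n) (Fin n) ℂ} (hA : A.PosSemidef) :
    Matrix (Fin n) (Fin n) ℂ :=
  hA.1.eigenvectorUnitary.1 * Matrix.diagonal ((↑) ∘ (Real.sqrt ·) ∘ hA.1.eigenvalues) *
    (star hA.1.eigenvectorUnitary : Matrix (Fin n) (Fin n) ℂ)

/-- `|A| = (AᴴA)^{1/2}`. -/
noncomputable def matAbs {n : ℕ} (A : Matrix (Fin n) (Fin n) ℂ) :
    Matrix (Fin n) (Fin n) ℂ :=
  oldPSDSqrt (Matrix.posSemidef_conjTranspose_mul_self A)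

/-- `tr|A|`, the sum of the singular values of `A`. -/
noncomputable def traceAbs {n : ℕ} (A : Matrix (Fin n) (Fin n) ℂ) : ℝ :=
  ((matAbs A).trace).re

/-- The singular values of `A` in decreasing order. -/
noncomputable def singVals {n : ℕ} (A : Matrix (Fin n) (Fin n) ℂ) : Fin n → ℝ :=
  eigsDec (matAbs A)

/-- The positive semidefinite square root of a PSD matrix (junk value `0` otherwise). -/
noncomputable def matSqrt {n : ℕ} (A : Matrix (Fin n) (Fin n) ℂ) :
    Matrix (Fin n) (Fin n) ℂ :=
  if hA : A.PosSemidef then oldPSDSqrt hA else 0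

/-- The fidelity `F(ρ,σ) = tr|ρ^{1/2} σ^{1/2}|`. -/
noncomputable def fidelity {n : ℕ} (ρ σ : Matrix (Fin n) (Fin n) ℂ) : ℝ :=
  traceAbs (matSqrt ρ * matSqrt σ)

/-- The relative entropy `S(ρ‖σ) = tr(ρ (log ρ - log σ))`. -/
noncomputable def relEntropy {n : ℕ} (ρ σ : Matrix (Fin n) (Fin n) ℂ) : ℝ :=
  ((ρ * (matFun Real.log ρ - matFun Real.log σ)).trace).re

/-- The (real) trace of a matrix whose trace is real. -/
noncomputable def trR {n : ℕ} (A : Matrix (Fin n) (Fin n) ℂ) : ℝ := A.trace.re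

namespace StmtAux

open Finset Polynomial

variable {n : ℕ}

/-- multiset of values of a tuple -/
def mset {α : Type*} (x : Fin n → α) : Multiset α := Finset.univ.val.map x

lemma mset_comp {α : Type*} (x : Fin n → α) (e : Equiv.Perm (Fin n)) :
    mset (x ∘ ⇑e) = mset x := by
  unfold mset
  rw [← Multiset.map_map, Multiset.map_univ_val_equiv]

lemma sortDec_eq_comp (x : Fin n → ℝ) :
    sortDec x = x ∘ ⇑(Fin.revPerm.trans (Tuple.sort x)) := rfl

lemma antitone_sortDec (x : Fin n → ℝ) : Antitone (sortDec x) := by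
  intro i j hij
  exact Tuple.monotone_sort x (by simpa [Fin.rev_le_rev] using hij)

lemma mset_sortDec (x : Fin n → ℝ) : mset (sortDec x) = mset x := by
  rw [sortDec_eq_comp, mset_comp]

lemma coe_ofFn {α : Type*} (x : Fin n → α) : (↑(List.ofFn x) : Multiset α) = mset x := by
  rw [List.ofFn_eq_map]
  rfl

lemma antitone_unique {f g : Fin n → ℝ} (hf : Antitone f) (hg : Antitone g)
    (h : mset f = mset g) : f = g := by
  haveI : IsAntisymm ℝ (· ≥ ·) := ⟨fun a b h1 h2 => le_antisymm h2 h1⟩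
  apply List.ofFn_injective
  apply List.Perm.eq_of_sortedGE
  · exact List.sortedGE_ofFn_iff.mpr hf
  · exact List.sortedGE_ofFn_iff.mpr hg
  · rw [← Multiset.coe_eq_coe, coe_ofFn, coe_ofFn]; exact h

lemma sortDec_congr {x y : Fin n → ℝ} (h : mset x = mset y) : sortDec x = sortDec y :=
  antitone_unique (antitone_sortDec x) (antitone_sortDec y)
    ((mset_sortDec x).trans (h.trans (mset_sortDec y).symm))

lemma sortDec_idem (x : Fin n → ℝ) : sortDec (sortDec x) = sortDec x :=
  antitone_unique (antitone_sortDec _) (antitone_sortDec x) (by rw [mset_sortDec])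

lemma sortDec_neg (x : Fin n → ℝ) :
    sortDec (fun i => - x i) = fun i => - sortDec x i.rev := by
  apply antitone_unique (antitone_sortDec _)
  · intro i j hij
    simp only [neg_le_neg_iff]
    exact antitone_sortDec x (by simpa [Fin.rev_le_rev] using hij)
  · have h1 : mset (fun i => - x i) = Multiset.map Neg.neg (mset x) := by
      unfold mset; rw [Multiset.map_map]; rfl
    have h2 : (fun i : Fin n => - sortDec x i.rev)
        = (fun i => - sortDec x i) ∘ ⇑(Fin.revPerm (n := n)) := rfl
    rw [mset_sortDec, h1, h2, mset_comp]
    have h3 : mset (fun i : Fin n => - sortDec x i)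
        = Multiset.map Neg.neg (mset (sortDec x)) := by
      unfold mset; rw [Multiset.map_map]; rfl
    rw [h3, mset_sortDec]

lemma sum_mset {α : Type*} [AddCommMonoid α] (x : Fin n → α) :
    ∑ i, x i = (mset x).sum := rfl

lemma sum_sortDec (x : Fin n → ℝ) : ∑ i, sortDec x i = ∑ i, x i := by
  rw [sum_mset, sum_mset, mset_sortDec]

lemma card_filter_lt {k : ℕ} (hk : k ≤ n) :
    (Finset.univ.filter (fun i : Fin n => (i : ℕ) < k)).card = k := by
  classical
  rw [Finset.card_filter, Fin.sum_univ_eq_sum_range (fun i => if i < k then (1:ℕ) else 0) n,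
    ← Finset.card_filter]
  have h : (Finset.range n).filter (fun i => i < k) = Finset.range k := by
    ext a
    simp only [Finset.mem_filter, Finset.mem_range]
    exact ⟨fun h => h.2, fun h => ⟨lt_of_lt_of_le h hk, h⟩⟩
  rw [h, Finset.card_range]

/-- Abel/threshold bound: for antitone `s` and weights `c ∈ [0,1]` summing to `k`,
`∑ c i * s i` is at most the sum of the first `k` entries of `s`. -/
lemma sum_mul_le_topk_antitone {k : ℕ} (hk : k ≤ n) (s c : Fin n → ℝ) (hs : Antitone s)
    (hc0 : ∀ i, 0 ≤ c i) (hc1 : ∀ i, c i ≤ 1) (hsum : ∑ i, c i = k) :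
    ∑ i, c i * s i ≤ ∑ i ∈ Finset.univ.filter (fun i : Fin n => (i : ℕ) < k), s i := by
  classical
  set χ : Fin n → ℝ := fun i => if (i : ℕ) < k then 1 else 0 with hχ
  have hfil : ∑ i ∈ Finset.univ.filter (fun i : Fin n => (i : ℕ) < k), s i
      = ∑ i, χ i * s i := by
    rw [Finset.sum_filter]
    refine Finset.sum_congr rfl (fun i _ => ?_)
    by_cases h : (i : ℕ) < k <;> simp [hχ, h]
  have hχsum : ∑ i, χ i = k := by
    have h := card_filter_lt (n := n) hk
    rw [hχ]
    rw [Finset.sum_boole]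
    exact_mod_cast congrArg (Nat.cast (R := ℝ)) h
  rw [hfil, ← sub_nonneg, ← Finset.sum_sub_distrib]
  have key : ∀ t : ℝ, (∀ i : Fin n, (i:ℕ) < k → t ≤ s i) → (∀ i : Fin n, k ≤ (i:ℕ) → s i ≤ t) →
      0 ≤ ∑ i, (χ i * s i - c i * s i) := by
    intro t ht1 ht2
    have hpt : ∀ i : Fin n, (χ i - c i) * t ≤ χ i * s i - c i * s i := by
      intro i
      have : (χ i - c i) * t ≤ (χ i - c i) * s i := by
        by_cases h : (i : ℕ) < k
        · have h1 : (0:ℝ) ≤ χ i - c i := by simp [hχ, h]; linarith [hc1 i]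
          exact mul_le_mul_of_nonneg_left (ht1 i h) h1
        · have h1 : χ i - c i ≤ 0 := by simp [hχ, h]; linarith [hc0 i]
          have := mul_le_mul_of_nonpos_left (ht2 i (le_of_not_gt h)) h1
          linarith
      linarith [this]
    calc (0:ℝ) = (∑ i, (χ i - c i)) * t := by
              rw [Finset.sum_sub_distrib, hχsum, hsum, sub_self, zero_mul]
      _ = ∑ i, (χ i - c i) * t := by rw [Finset.sum_mul]
      _ ≤ _ := Finset.sum_le_sum (fun i _ => hpt i)
  rcases lt_or_eq_of_le hk with h | h
  · refine key (s ⟨k, h⟩) (fun i hi => hs ?_) (fun i hi => hs ?_)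
    · exact le_of_lt (by simpa [Fin.lt_def] using hi)
    · simpa [Fin.le_def] using hi
  · -- k = n : all weights must be 1
    have hone : ∀ i : Fin n, c i = 1 := by
      intro i
      have hz : ∑ j, (1 - c j) = 0 := by
        rw [Finset.sum_sub_distrib, hsum, h]
        simp
      have := (Finset.sum_eq_zero_iff_of_nonneg
        (fun j _ => by linarith [hc1 j])).mp hz i (Finset.mem_univ i)
      linarith
    have : ∀ i : Fin n, χ i = 1 := fun i => by simp [hχ, h, i.isLt]
    refine le_of_eq (Finset.sum_eq_zero (fun i _ => ?_)).symm
    rw [this i, hone i]; ring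

/-- Ky Fan type bound for arbitrary tuples. -/
lemma sum_mul_le_topk {k : ℕ} (hk : k ≤ n) (x c : Fin n → ℝ)
    (hc0 : ∀ i, 0 ≤ c i) (hc1 : ∀ i, c i ≤ 1) (hsum : ∑ i, c i = k) :
    ∑ i, c i * x i ≤ ∑ i ∈ Finset.univ.filter (fun i : Fin n => (i : ℕ) < k), sortDec x i := by
  classical
  set e := Fin.revPerm.trans (Tuple.sort x) with he
  have hx : ∀ i, x (e i) = sortDec x i := fun i => rfl
  have h1 : ∑ i, c i * x i = ∑ i, (c (e i)) * sortDec x i := by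
    rw [← Equiv.sum_comp e (fun i => c i * x i)]
    exact Finset.sum_congr rfl (fun i _ => by rw [hx])
  rw [h1]
  refine sum_mul_le_topk_antitone hk _ _ (antitone_sortDec x) (fun i => hc0 _) (fun i => hc1 _) ?_
  rw [Equiv.sum_comp e c, hsum]

/-- Dual bound: the sum of the `k` smallest entries is a lower bound. -/
lemma botk_le_sum_mul {k : ℕ} (hk : k ≤ n) (x c : Fin n → ℝ)
    (hc0 : ∀ i, 0 ≤ c i) (hc1 : ∀ i, c i ≤ 1) (hsum : ∑ i, c i = k) :
    ∑ i ∈ Finset.univ.filter (fun i : Fin n => (i : ℕ) < k), sortDec x i.rev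
      ≤ ∑ i, c i * x i := by
  have h1 := sum_mul_le_topk hk (fun i => - x i) c hc0 hc1 hsum
  rw [sortDec_neg] at h1
  simp only [mul_neg, Finset.sum_neg_distrib] at h1
  linarith
/-! ### characteristic polynomial lemmas -/

lemma charpoly_unitary_conj (U A : Matrix (Fin n) (Fin n) ℂ)
    (hU : U ∈ Matrix.unitaryGroup (Fin n) ℂ) :
    (U * A * star U).charpoly = A.charpoly := by
  classical
  set m : Matrix (Fin n) (Fin n) ℂ →+* Matrix (Fin n) (Fin n) ℂ[X] :=
    (Polynomial.C : ℂ →+* ℂ[X]).mapMatrix with hm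
  have hUU : U * star U = 1 := (Matrix.mem_unitaryGroup_iff.mp hU)
  have hmul : m U * m (star U) = 1 := by rw [← _root_.map_mul, hUU, _root_.map_one]
  have hscal : (Matrix.scalar (Fin n) (X : ℂ[X])) = (X : ℂ[X]) • (1 : Matrix (Fin n) (Fin n) ℂ[X]) := by
    ext i j
    rw [Matrix.scalar_apply, Matrix.smul_apply, Matrix.one_apply]
    by_cases h : i = j
    · simp [h]
    · simp [h, Matrix.diagonal_apply_ne _ h]
  have hch : charmatrix (U * A * star U) = m U * charmatrix A * m (star U) := by
    unfold charmatrix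
    rw [_root_.map_mul, _root_.map_mul, hscal]
    rw [Matrix.mul_sub, Matrix.sub_mul]
    congr 1
    rw [Matrix.mul_smul, mul_one, Matrix.smul_mul, hmul]
  rw [Matrix.charpoly, Matrix.charpoly, hch, Matrix.det_mul, Matrix.det_mul]
  have : (m U).det * (m (star U)).det = 1 := by rw [← Matrix.det_mul, hmul, Matrix.det_one]
  calc (m U).det * (charmatrix A).det * (m (star U)).det
      = (charmatrix A).det * ((m U).det * (m (star U)).det) := by ring
    _ = (charmatrix A).det := by rw [this, mul_one]

lemma charpoly_diagonal (d : Fin n → ℂ) :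
    (Matrix.diagonal d).charpoly = (Finset.univ.val.map (fun i => X - C (d i))).prod := by
  classical
  have h : charmatrix (Matrix.diagonal d) = Matrix.diagonal (fun i => X - C (d i)) := by
    ext i j
    rw [charmatrix_apply]
    by_cases hij : i = j
    · subst hij; simp
    · simp [Matrix.diagonal_apply_ne _ hij]
  rw [Matrix.charpoly, h, Matrix.det_diagonal]
  rfl

lemma roots_charpoly_diagonal (d : Fin n → ℂ) :
    (Matrix.diagonal d).charpoly.roots = mset d := by
  rw [charpoly_diagonal]
  have : (Finset.univ.val.map (fun i => X - C (d i)))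
      = ((mset d).map (fun a => X - C a)) := by
    unfold mset; rw [Multiset.map_map]; rfl
  rw [this, Polynomial.roots_multiset_prod_X_sub_C]

lemma roots_charpoly_hermitian (A : Matrix (Fin n) (Fin n) ℂ) (hA : A.IsHermitian) :
    A.charpoly.roots = mset (fun i => (hA.eigenvalues i : ℂ)) := by
  conv_lhs => rw [hA.spectral_theorem, Unitary.conjStarAlgAut_apply]
  rw [charpoly_unitary_conj _ _ (hA.eigenvectorUnitary).2, roots_charpoly_diagonal]
  rfl

lemma mset_eigenvalues_of_charpoly_eq {A B : Matrix (Fin n) (Fin n) ℂ}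
    (hA : A.IsHermitian) (hB : B.IsHermitian) (h : A.charpoly = B.charpoly) :
    mset hA.eigenvalues = mset hB.eigenvalues := by
  have h1 := roots_charpoly_hermitian A hA
  have h2 := roots_charpoly_hermitian B hB
  rw [h, h2] at h1
  have h3 : Multiset.map (Complex.ofReal) (mset hA.eigenvalues)
      = Multiset.map (Complex.ofReal) (mset hB.eigenvalues) := by
    unfold mset
    rw [Multiset.map_map, Multiset.map_map]
    exact h1.symm
  exact Multiset.map_injective Complex.ofReal_injective h3

lemma mset_eigenvalues_diagonal (w : Fin n → ℝ)
    (hH : (Matrix.diagonal (fun i => (w i : ℂ))).IsHermitian) :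
    mset hH.eigenvalues = mset w := by
  have h1 := roots_charpoly_hermitian _ hH
  rw [roots_charpoly_diagonal] at h1
  have h3 : Multiset.map (Complex.ofReal) (mset hH.eigenvalues)
      = Multiset.map (Complex.ofReal) (mset w) := by
    unfold mset
    rw [Multiset.map_map, Multiset.map_map]
    exact h1.symm
  exact Multiset.map_injective Complex.ofReal_injective h3

/-! ### Hermitian / unitary lemmas -/

lemma eigsDec_herm (A : Matrix (Fin n) (Fin n) ℂ) (hA : A.IsHermitian) :
    eigsDec A = sortDec hA.eigenvalues := dif_pos hA

lemma isHermitian_conj {A U : Matrix (Fin n) (Fin n) ℂ} (hA : A.IsHermitian)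
    (hU : U ∈ Matrix.unitaryGroup (Fin n) ℂ) : (U * A * star U).IsHermitian := by
  unfold Matrix.IsHermitian
  rw [Matrix.star_eq_conjTranspose, Matrix.conjTranspose_mul, Matrix.conjTranspose_mul,
    Matrix.conjTranspose_conjTranspose, hA.eq, Matrix.mul_assoc]

lemma eigsDec_conj {A U : Matrix (Fin n) (Fin n) ℂ} (hA : A.IsHermitian)
    (hU : U ∈ Matrix.unitaryGroup (Fin n) ℂ) :
    eigsDec (U * A * star U) = eigsDec A := by
  rw [eigsDec_herm _ (isHermitian_conj hA hU), eigsDec_herm _ hA]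
  exact sortDec_congr (mset_eigenvalues_of_charpoly_eq _ _ (charpoly_unitary_conj U A hU))

lemma sum_eigenvalues (A : Matrix (Fin n) (Fin n) ℂ) (hA : A.IsHermitian) :
    ∑ i, hA.eigenvalues i = A.trace.re := by
  have h : A.trace = ((∑ i, hA.eigenvalues i : ℝ) : ℂ) := by
    conv_lhs => rw [hA.spectral_theorem, Unitary.conjStarAlgAut_apply]
    rw [Matrix.trace_mul_cycle]
    rw [Matrix.mem_unitaryGroup_iff'.mp (hA.eigenvectorUnitary).2, Matrix.one_mul,
      Matrix.trace_diagonal]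
    push_cast
    rfl
  rw [h, Complex.ofReal_re]

/-! ### Ky Fan style diagonal bound -/

lemma diag_bound (B : Matrix (Fin n) (Fin n) ℂ) (hB : B.IsHermitian)
    (W : Matrix (Fin n) (Fin n) ℂ) (hW : W ∈ Matrix.unitaryGroup (Fin n) ℂ)
    (S : Finset (Fin n)) {k : ℕ} (hcard : S.card = k) (hk : k ≤ n) :
    (∑ i ∈ Finset.univ.filter (fun i : Fin n => (i : ℕ) < k), sortDec hB.eigenvalues i.rev
        ≤ ∑ j ∈ S, ((star W * B * W) j j).re) ∧
      (∑ j ∈ S, ((star W * B * W) j j).re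
        ≤ ∑ i ∈ Finset.univ.filter (fun i : Fin n => (i : ℕ) < k), sortDec hB.eigenvalues i) := by
  classical
  set V : Matrix (Fin n) (Fin n) ℂ := ↑hB.eigenvectorUnitary with hV
  set Q : Matrix (Fin n) (Fin n) ℂ := star W * V with hQ
  have hQmem : Q ∈ Matrix.unitaryGroup (Fin n) ℂ :=
    mul_mem (Unitary.star_mem hW) (hB.eigenvectorUnitary).2
  have hQQ : Q * star Q = 1 := Matrix.mem_unitaryGroup_iff.mp hQmem
  have hQQ' : star Q * Q = 1 := Matrix.mem_unitaryGroup_iff'.mp hQmem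
  set μ : Fin n → ℝ := hB.eigenvalues with hμ
  have hWBW : star W * B * W = Q * Matrix.diagonal (fun i => (μ i : ℂ)) * star Q := by
    conv_lhs => rw [hB.spectral_theorem, Unitary.conjStarAlgAut_apply]
    have hdg : Matrix.diagonal ((RCLike.ofReal : ℝ → ℂ) ∘ hB.eigenvalues)
        = Matrix.diagonal (fun i => (μ i : ℂ)) := rfl
    rw [hQ]
    simp only [StarMul.star_mul, star_star, ← hV, hdg, Matrix.mul_assoc]
  have hdiag : ∀ j, ((star W * B * W) j j).re = ∑ a, μ a * Complex.normSq (Q j a) := by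
    intro j
    rw [hWBW]
    rw [Matrix.mul_apply]
    rw [Complex.re_sum]
    refine Finset.sum_congr rfl (fun a _ => ?_)
    rw [Matrix.mul_diagonal, Matrix.star_eq_conjTranspose, Matrix.conjTranspose_apply]
    have : Q j a * (μ a : ℂ) * star (Q j a) = (μ a : ℂ) * (Q j a * star (Q j a)) := by ring
    rw [this, Complex.star_def, Complex.mul_conj, ← Complex.ofReal_mul, Complex.ofReal_re]
  set c : Fin n → ℝ := fun a => ∑ j ∈ S, Complex.normSq (Q j a) with hc
  have hsum_eq : ∑ j ∈ S, ((star W * B * W) j j).re = ∑ a, c a * μ a := by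
    rw [Finset.sum_congr rfl (fun j _ => hdiag j), Finset.sum_comm]
    refine Finset.sum_congr rfl (fun a _ => ?_)
    rw [hc, Finset.sum_mul]
    exact Finset.sum_congr rfl (fun j _ => by ring)
  have hc0 : ∀ a, 0 ≤ c a := fun a => Finset.sum_nonneg (fun j _ => Complex.normSq_nonneg _)
  have hcol : ∀ a, ∑ j, Complex.normSq (Q j a) = 1 := by
    intro a
    have h1 : (star Q * Q) a a = 1 := by rw [hQQ']; simp [Matrix.one_apply]
    rw [Matrix.mul_apply] at h1
    have h2 : ∀ j, (star Q) a j * Q j a = ((Complex.normSq (Q j a) : ℝ) : ℂ) := by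
      intro j
      rw [Matrix.star_eq_conjTranspose, Matrix.conjTranspose_apply, mul_comm,
        Complex.star_def, Complex.mul_conj]
    rw [Finset.sum_congr rfl (fun j _ => h2 j)] at h1
    have := congrArg Complex.re h1
    rw [Complex.re_sum] at this
    simpa using this
  have hrow : ∀ j, ∑ a, Complex.normSq (Q j a) = 1 := by
    intro j
    have h1 : (Q * star Q) j j = 1 := by rw [hQQ]; simp [Matrix.one_apply]
    rw [Matrix.mul_apply] at h1
    have h2 : ∀ a, Q j a * (star Q) a j = ((Complex.normSq (Q j a) : ℝ) : ℂ) := by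
      intro a
      rw [Matrix.star_eq_conjTranspose, Matrix.conjTranspose_apply,
        Complex.star_def, Complex.mul_conj]
    rw [Finset.sum_congr rfl (fun a _ => h2 a)] at h1
    have := congrArg Complex.re h1
    rw [Complex.re_sum] at this
    simpa using this
  have hc1 : ∀ a, c a ≤ 1 := by
    intro a
    rw [hc]
    calc ∑ j ∈ S, Complex.normSq (Q j a) ≤ ∑ j, Complex.normSq (Q j a) :=
          Finset.sum_le_sum_of_subset_of_nonneg (Finset.subset_univ S)
            (fun j _ _ => Complex.normSq_nonneg _)
      _ = 1 := hcol a
  have hcsum : ∑ a, c a = k := by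
    rw [hc, Finset.sum_comm]
    rw [Finset.sum_congr rfl (fun j _ => hrow j)]
    simp [hcard]
  constructor
  · rw [hsum_eq]
    exact botk_le_sum_mul hk μ c hc0 hc1 hcsum
  · rw [hsum_eq]
    exact sum_mul_le_topk hk μ c hc0 hc1 hcsum

/-! ### permutation matrices -/

lemma star_permMatrix (σ : Equiv.Perm (Fin n)) :
    star (σ.permMatrix ℂ) = (σ⁻¹).permMatrix ℂ := by
  ext i j
  rw [Matrix.star_eq_conjTranspose, Matrix.conjTranspose_apply]
  show star (PEquiv.toMatrix σ.toPEquiv j i) = PEquiv.toMatrix (σ⁻¹).toPEquiv i j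
  rw [PEquiv.toMatrix_apply, PEquiv.toMatrix_apply]
  simp only [Equiv.toPEquiv_apply, Option.mem_def, Option.some.injEq]
  by_cases h : i = σ j
  · subst h; simp
  · have h2 : ¬ (j = σ⁻¹ i) := fun hc => h (by simp [hc])
    rw [if_neg (fun hc => h hc.symm), if_neg (fun hc => h2 hc.symm)]
    exact star_zero ℂ

lemma permMatrix_mem_unitary (σ : Equiv.Perm (Fin n)) :
    σ.permMatrix ℂ ∈ Matrix.unitaryGroup (Fin n) ℂ := by
  rw [Matrix.mem_unitaryGroup_iff']
  rw [star_permMatrix]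
  show ((σ⁻¹).toPEquiv.toMatrix : Matrix (Fin n) (Fin n) ℂ) * σ.toPEquiv.toMatrix = 1
  rw [← PEquiv.toMatrix_trans, ← Equiv.toPEquiv_trans]
  have : (σ⁻¹ : Equiv.Perm (Fin n)).trans σ = Equiv.refl (Fin n) := by
    ext x; simp
  rw [this, Equiv.toPEquiv_refl, PEquiv.toMatrix_refl]

lemma permMatrix_conj_diagonal (σ : Equiv.Perm (Fin n)) (v : Fin n → ℂ) :
    (σ.permMatrix ℂ) * Matrix.diagonal v * star (σ.permMatrix ℂ)
      = Matrix.diagonal (v ∘ ⇑σ) := by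
  rw [star_permMatrix]
  show (σ.toPEquiv.toMatrix : Matrix (Fin n) (Fin n) ℂ) * Matrix.diagonal v *
      (σ⁻¹).toPEquiv.toMatrix = Matrix.diagonal (v ∘ ⇑σ)
  rw [PEquiv.toMatrix_toPEquiv_mul]
  have : (σ⁻¹ : Equiv.Perm (Fin n)) = (σ : Equiv.Perm (Fin n)).symm := rfl
  rw [this, PEquiv.mul_toMatrix_toPEquiv]
  rw [Matrix.submatrix_submatrix]
  simpa using Matrix.submatrix_diagonal_equiv v σ

lemma filter_sum_le_topk {k : ℕ} (hk : k ≤ n) (w : Fin n → ℝ) :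
    ∑ i ∈ Finset.univ.filter (fun i : Fin n => (i : ℕ) < k), w i
      ≤ ∑ i ∈ Finset.univ.filter (fun i : Fin n => (i : ℕ) < k), sortDec w i := by
  classical
  set χ : Fin n → ℝ := fun i => if (i : ℕ) < k then 1 else 0 with hχ
  have h1 : ∑ i ∈ Finset.univ.filter (fun i : Fin n => (i : ℕ) < k), w i = ∑ i, χ i * w i := by
    rw [Finset.sum_filter]
    refine Finset.sum_congr rfl (fun i _ => ?_)
    by_cases h : (i : ℕ) < k <;> simp [hχ, h]
  have hχsum : ∑ i, χ i = k := by
    have h := card_filter_lt (n := n) hk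
    rw [hχ, Finset.sum_boole]
    exact_mod_cast congrArg (Nat.cast (R := ℝ)) h
  rw [h1]
  refine sum_mul_le_topk hk w χ (fun i => ?_) (fun i => ?_) hχsum
  · by_cases h : (i : ℕ) < k <;> simp [hχ, h]
  · by_cases h : (i : ℕ) < k <;> simp [hχ, h]

end StmtAux

/-- For density matrices `ρ1, ρ2` and a Schur-convex `d`, the maximum of
`d(λ(ρ1 - U ρ2 Uᴴ))` over unitary `U` equals `d(λ(Λ↓(ρ1) - Λ↑(ρ2)))`. -/
theorem stmt_0 {n : ℕ} (ρ1 ρ2 : Matrix (Fin n) (Fin n) ℂ)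
    (h1 : IsDensityMatrix ρ1) (h2 : IsDensityMatrix ρ2)
    (d : (Fin n → ℝ) → ℝ) (hd : SchurConvex d) :
    (∀ U ∈ Matrix.unitaryGroup (Fin n) ℂ,
        d (eigsDec (ρ1 - U * ρ2 * Uᴴ)) ≤ d (eigsDec (LambdaDown ρ1 - LambdaUp ρ2))) ∧
      ∃ U ∈ Matrix.unitaryGroup (Fin n) ℂ,
        d (eigsDec (ρ1 - U * ρ2 * Uᴴ)) = d (eigsDec (LambdaDown ρ1 - LambdaUp ρ2)) := by
  classical
  obtain ⟨hpsd1, htr1⟩ := h1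
  obtain ⟨hpsd2, htr2⟩ := h2
  have hh1 : ρ1.IsHermitian := hpsd1.1
  have hh2 : ρ2.IsHermitian := hpsd2.1
  set w : Fin n → ℝ := fun i => eigsDec ρ1 i - eigsInc ρ2 i with hw
  have hDm : LambdaDown ρ1 - LambdaUp ρ2 = Matrix.diagonal (fun i => (w i : ℂ)) := by
    unfold LambdaDown LambdaUp
    rw [Matrix.diagonal_sub]
    congr 1
    funext i
    rw [hw]
    push_cast
    ring
  have hDmH : (Matrix.diagonal (fun i => (w i : ℂ))).IsHermitian := by
    apply Matrix.isHermitian_diagonal_of_self_adjoint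
    funext i
    simp [Complex.conj_ofReal]
  have hDmH' : (LambdaDown ρ1 - LambdaUp ρ2).IsHermitian := by rw [hDm]; exact hDmH
  have hy : eigsDec (LambdaDown ρ1 - LambdaUp ρ2) = sortDec w := by
    rw [hDm, StmtAux.eigsDec_herm _ hDmH]
    exact StmtAux.sortDec_congr (StmtAux.mset_eigenvalues_diagonal w hDmH)
  have hsum1 : ∑ i, eigsDec ρ1 i = 1 := by
    rw [StmtAux.eigsDec_herm _ hh1, StmtAux.sum_sortDec, StmtAux.sum_eigenvalues _ hh1, htr1]
    simp
  have hsum2 : ∑ i, eigsInc ρ2 i = 1 := by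
    have h : ∑ i, eigsInc ρ2 i = ∑ i, eigsDec ρ2 i :=
      Equiv.sum_comp (Fin.revPerm (n := n)) (eigsDec ρ2)
    rw [h]
    rw [StmtAux.eigsDec_herm _ hh2, StmtAux.sum_sortDec, StmtAux.sum_eigenvalues _ hh2, htr2]
    simp
  have hsumw : ∑ i, w i = 0 := by
    rw [hw, Finset.sum_sub_distrib, hsum1, hsum2]
    ring
  have maj : ∀ U ∈ Matrix.unitaryGroup (Fin n) ℂ,
      Majorizes (eigsDec (ρ1 - U * ρ2 * Uᴴ)) (eigsDec (LambdaDown ρ1 - LambdaUp ρ2)) := by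
    intro U hU
    have hUc : Uᴴ = star U := rfl
    rw [hUc]
    have hUconjH : (U * ρ2 * star U).IsHermitian := StmtAux.isHermitian_conj hh2 hU
    have hCH : (ρ1 - U * ρ2 * star U).IsHermitian := hh1.sub hUconjH
    set μ : Fin n → ℝ := hCH.eigenvalues with hμ
    have hx : eigsDec (ρ1 - U * ρ2 * star U) = sortDec μ := StmtAux.eigsDec_herm _ hCH
    have htrC : (ρ1 - U * ρ2 * star U).trace.re = 0 := by
      rw [Matrix.trace_sub]
      have h : (U * ρ2 * star U).trace = ρ2.trace := by
        rw [Matrix.trace_mul_cycle, Matrix.mem_unitaryGroup_iff'.mp hU, Matrix.one_mul]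
      rw [h, htr1, htr2]
      simp
    have hsumx : ∑ i, eigsDec (ρ1 - U * ρ2 * star U) i = 0 := by
      rw [hx, StmtAux.sum_sortDec]
      rw [StmtAux.sum_eigenvalues _ hCH]
      exact htrC
    have hsumy : ∑ i, eigsDec (LambdaDown ρ1 - LambdaUp ρ2) i = 0 := by
      rw [hy, StmtAux.sum_sortDec, hsumw]
    constructor
    · intro k
      rcases le_or_gt k n with hk | hk
      · -- k ≤ n : Ky Fan argument
        rw [hx, hy, StmtAux.sortDec_idem, StmtAux.sortDec_idem]
        set σ : Equiv.Perm (Fin n) := Fin.revPerm.trans (Tuple.sort μ) with hσ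
        set S : Finset (Fin n) :=
          (Finset.univ.filter (fun i : Fin n => (i : ℕ) < k)).image ⇑σ with hS
        have hcard : S.card = k := by
          rw [hS, Finset.card_image_of_injective _ σ.injective, StmtAux.card_filter_lt hk]
        have hsum_S : ∑ i ∈ Finset.univ.filter (fun i : Fin n => (i : ℕ) < k), sortDec μ i
            = ∑ j ∈ S, μ j := by
          rw [hS, Finset.sum_image (fun a _ b _ h => σ.injective h)]
          rfl
        set V : Matrix (Fin n) (Fin n) ℂ := ↑hCH.eigenvectorUnitary with hV
        have hVmem : V ∈ Matrix.unitaryGroup (Fin n) ℂ := hCH.eigenvectorUnitary.2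
        set W2 : Matrix (Fin n) (Fin n) ℂ := star U * V with hW2
        have hW2mem : W2 ∈ Matrix.unitaryGroup (Fin n) ℂ :=
          mul_mem (Unitary.star_mem hU) hVmem
        have hXeq : star V * (U * ρ2 * star U) * V = star W2 * ρ2 * W2 := by
          rw [hW2]
          simp only [StarMul.star_mul, star_star, Matrix.mul_assoc]
        have hdiagC : star V * (ρ1 - U * ρ2 * star U) * V
            = Matrix.diagonal ((RCLike.ofReal : ℝ → ℂ) ∘ μ) :=
          by have h := hCH.conjStarAlgAut_star_eigenvectorUnitary; rw [Unitary.conjStarAlgAut_star_apply] at h; exact h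
        have hkey : ∀ j, μ j = ((star V * ρ1 * V) j j).re - ((star W2 * ρ2 * W2) j j).re := by
          intro j
          have hsplit : star V * (ρ1 - U * ρ2 * star U) * V
              = star V * ρ1 * V - star W2 * ρ2 * W2 := by
            rw [← hXeq, Matrix.mul_sub, Matrix.sub_mul]
          have h1 : Matrix.diagonal ((RCLike.ofReal : ℝ → ℂ) ∘ μ) j j
              = (star V * ρ1 * V) j j - (star W2 * ρ2 * W2) j j := by
            rw [← hdiagC, hsplit, Matrix.sub_apply]
          have h2 := congrArg Complex.re h1
          rw [Matrix.diagonal_apply_eq] at h2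
          simpa using h2
        have hB1 := (StmtAux.diag_bound ρ1 hh1 V hVmem S hcard hk).2
        have hB2 := (StmtAux.diag_bound ρ2 hh2 W2 hW2mem S hcard hk).1
        calc ∑ i ∈ Finset.univ.filter (fun i : Fin n => (i : ℕ) < k), sortDec μ i
            = ∑ j ∈ S, μ j := hsum_S
          _ = ∑ j ∈ S, ((star V * ρ1 * V) j j).re
              - ∑ j ∈ S, ((star W2 * ρ2 * W2) j j).re := by
              rw [← Finset.sum_sub_distrib]
              exact Finset.sum_congr rfl (fun j _ => hkey j)
          _ ≤ ∑ i ∈ Finset.univ.filter (fun i : Fin n => (i : ℕ) < k),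
                sortDec hh1.eigenvalues i
              - ∑ i ∈ Finset.univ.filter (fun i : Fin n => (i : ℕ) < k),
                sortDec hh2.eigenvalues i.rev := sub_le_sub hB1 hB2
          _ = ∑ i ∈ Finset.univ.filter (fun i : Fin n => (i : ℕ) < k), w i := by
              rw [← Finset.sum_sub_distrib]
              refine Finset.sum_congr rfl (fun i _ => ?_)
              show sortDec hh1.eigenvalues i - sortDec hh2.eigenvalues i.rev
                  = eigsDec ρ1 i - eigsInc ρ2 i
              unfold eigsInc
              rw [StmtAux.eigsDec_herm _ hh1, StmtAux.eigsDec_herm _ hh2]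
          _ ≤ ∑ i ∈ Finset.univ.filter (fun i : Fin n => (i : ℕ) < k), sortDec w i :=
              StmtAux.filter_sum_le_topk hk w
      · -- n < k : full sums
        have hfil : (Finset.univ.filter (fun i : Fin n => (i : ℕ) < k)) = Finset.univ :=
          Finset.filter_true_of_mem (fun i _ => lt_trans i.isLt hk)
        rw [hfil]
        rw [StmtAux.sum_sortDec, StmtAux.sum_sortDec, hsumx, hsumy]
    · rw [hsumx, hsumy]
  refine ⟨fun U hU => hd _ _ (maj U hU), ?_⟩
  -- existence of optimal U
  set ev1 : Fin n → ℝ := hh1.eigenvalues with hev1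
  set ev2 : Fin n → ℝ := hh2.eigenvalues with hev2
  set σ1 : Equiv.Perm (Fin n) := Fin.revPerm.trans (Tuple.sort ev1) with hσ1
  set σ2 : Equiv.Perm (Fin n) := Tuple.sort ev2 with hσ2
  set V1 : Matrix (Fin n) (Fin n) ℂ := ↑hh1.eigenvectorUnitary with hV1
  set V2 : Matrix (Fin n) (Fin n) ℂ := ↑hh2.eigenvectorUnitary with hV2
  have hV1mem : V1 ∈ Matrix.unitaryGroup (Fin n) ℂ := hh1.eigenvectorUnitary.2
  have hV2mem : V2 ∈ Matrix.unitaryGroup (Fin n) ℂ := hh2.eigenvectorUnitary.2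
  set P1 : Matrix (Fin n) (Fin n) ℂ := σ1.permMatrix ℂ with hP1
  set P2 : Matrix (Fin n) (Fin n) ℂ := σ2.permMatrix ℂ with hP2
  have hP1mem : P1 ∈ Matrix.unitaryGroup (Fin n) ℂ := StmtAux.permMatrix_mem_unitary σ1
  have hP2mem : P2 ∈ Matrix.unitaryGroup (Fin n) ℂ := StmtAux.permMatrix_mem_unitary σ2
  set W : Matrix (Fin n) (Fin n) ℂ := V1 * star P1 with hWdef
  have hWmem : W ∈ Matrix.unitaryGroup (Fin n) ℂ := mul_mem hV1mem (Unitary.star_mem hP1mem)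
  set U : Matrix (Fin n) (Fin n) ℂ := W * P2 * star V2 with hUdef
  have hUmem : U ∈ Matrix.unitaryGroup (Fin n) ℂ :=
    mul_mem (mul_mem hWmem hP2mem) (Unitary.star_mem hV2mem)
  refine ⟨U, hUmem, ?_⟩
  have hcancel1 : ∀ X : Matrix (Fin n) (Fin n) ℂ, star P1 * (P1 * X) = X := by
    intro X
    rw [← Matrix.mul_assoc, Matrix.mem_unitaryGroup_iff'.mp hP1mem, Matrix.one_mul]
  have hLD : LambdaDown ρ1 = P1 * Matrix.diagonal (fun i => (ev1 i : ℂ)) * star P1 := by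
    rw [StmtAux.permMatrix_conj_diagonal]
    unfold LambdaDown
    refine congrArg Matrix.diagonal ?_
    funext i
    show (eigsDec ρ1 i : ℂ) = ((ev1 (σ1 i) : ℝ) : ℂ)
    rw [StmtAux.eigsDec_herm _ hh1]
    rfl
  have hLU : LambdaUp ρ2 = P2 * Matrix.diagonal (fun i => (ev2 i : ℂ)) * star P2 := by
    rw [StmtAux.permMatrix_conj_diagonal]
    unfold LambdaUp
    refine congrArg Matrix.diagonal ?_
    funext i
    show (eigsInc ρ2 i : ℂ) = ((ev2 (σ2 i) : ℝ) : ℂ)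
    unfold eigsInc
    rw [StmtAux.eigsDec_herm _ hh2]
    unfold sortDec
    rw [Fin.rev_rev]
  have hρ1eq : ρ1 = W * LambdaDown ρ1 * star W := by
    rw [hLD, hWdef]
    simp only [StarMul.star_mul, star_star, Matrix.mul_assoc]
    rw [hcancel1, hcancel1]
    have hsp := hh1.spectral_theorem
    have : Matrix.diagonal ((RCLike.ofReal : ℝ → ℂ) ∘ hh1.eigenvalues)
        = Matrix.diagonal (fun i => (ev1 i : ℂ)) := rfl
    rw [this] at hsp
    rw [← Matrix.mul_assoc]
    exact hsp
  have hρ2diag : star V2 * ρ2 * V2 = Matrix.diagonal (fun i => (ev2 i : ℂ)) :=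
    by have h := hh2.conjStarAlgAut_star_eigenvectorUnitary; rw [Unitary.conjStarAlgAut_star_apply] at h; exact h
  have hcancelV2 : ∀ X : Matrix (Fin n) (Fin n) ℂ, star V2 * (V2 * X) = X := by
    intro X
    rw [← Matrix.mul_assoc, Matrix.mem_unitaryGroup_iff'.mp hV2mem, Matrix.one_mul]
  have hρ2sp : ρ2 = V2 * Matrix.diagonal (fun i => (ev2 i : ℂ)) * star V2 := by
    have hsp := hh2.spectral_theorem
    have hd : Matrix.diagonal ((RCLike.ofReal : ℝ → ℂ) ∘ hh2.eigenvalues)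
        = Matrix.diagonal (fun i => (ev2 i : ℂ)) := rfl
    rw [hd] at hsp
    exact hsp
  have hUρ2 : U * ρ2 * star U = W * LambdaUp ρ2 * star W := by
    rw [hUdef, hLU]
    conv_lhs => rw [hρ2sp]
    simp only [StarMul.star_mul, star_star, Matrix.mul_assoc]
    rw [hcancelV2, hcancelV2]
  have hUc : Uᴴ = star U := rfl
  have hkey : ρ1 - U * ρ2 * Uᴴ = W * (LambdaDown ρ1 - LambdaUp ρ2) * star W := by
    rw [hUc, Matrix.mul_sub, Matrix.sub_mul, ← hρ1eq, ← hUρ2]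
  rw [hkey]
  congr 1
  exact StmtAux.eigsDec_conj hDmH' hWmem
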